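/- Let p be a prime number and let 𝔪 be the ideal of ℤ[X] generated by the constant polynomial p and by 1 − X. If x, y ∈ ℤ[X] and n, m are natural numbers such that x ∈ 𝔪^n, x ∉ 𝔪^{n+1}, y ∈ 𝔪^m and y ∉ 𝔪^{m+1}, then x·y ∈ 𝔪^{n+m} and x·y ∉ 𝔪^{n+m+1}. (This is the multiplicativity of the 𝔪-adic absolute value |x|_𝔪 = p^{−n}.) -/

import Mathlib

open Polynomial

/-- The substitution `X ↦ 1 - X` as a ring hom on `ℤ[X]`. -/
noncomputable def madicSigma : Polynomial ℤ →+* Polynomial ℤ :=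
  eval₂RingHom C (1 - X)

lemma madicSigma_apply (x : Polynomial ℤ) : madicSigma x = x.comp (1 - X) := rfl

lemma madicSigma_sigma (x : Polynomial ℤ) : madicSigma (madicSigma x) = x := by
  simp only [madicSigma_apply, Polynomial.comp_assoc]
  simp [sub_comp, sub_sub_cancel]

lemma madicSigma_surj : Function.Surjective madicSigma :=
  fun z => ⟨madicSigma z, madicSigma_sigma z⟩

lemma madicSigma_inj : Function.Injective madicSigma :=
  Function.LeftInverse.injective madicSigma_sigma

/-- Membership in powers of the ideal `(p, X)` in terms of coefficients. -/
lemma mem_span_pX_pow_iff (p : ℕ) (k : ℕ) (x : Polynomial ℤ) :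
    x ∈ (Ideal.span {C (p : ℤ), X} : Ideal (Polynomial ℤ)) ^ k ↔
      ∀ i, (p : ℤ) ^ (k - i) ∣ x.coeff i := by
  induction k generalizing x with
  | zero => simp
  | succ k ih =>
    constructor
    · intro hx
      rw [pow_succ] at hx
      refine Submodule.mul_induction_on hx ?_ ?_
      · intro a ha b hb i
        rw [Ideal.mem_span_pair] at hb
        obtain ⟨u, v, rfl⟩ := hb
        rw [mul_add, coeff_add]
        apply dvd_add
        · have h1 : a * (u * C (p : ℤ)) = (a * u) * C (p : ℤ) := by ring
          rw [h1, coeff_mul_C]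
          obtain ⟨c, hc⟩ := (ih (a * u)).mp (Ideal.mul_mem_right u _ ha) i
          rw [hc]
          calc (p : ℤ) ^ (k + 1 - i) ∣ (p : ℤ) ^ (k - i + 1) :=
                pow_dvd_pow _ (by omega)
            _ ∣ (p : ℤ) ^ (k - i) * c * (p : ℤ) := ⟨c, by ring⟩
        · have h1 : a * (v * X) = (a * v) * X := by ring
          rw [h1]
          cases i with
          | zero => simp
          | succ i =>
            rw [coeff_mul_X]
            have := (ih (a * v)).mp (Ideal.mul_mem_right v _ ha) i
            exact dvd_trans (pow_dvd_pow _ (by omega)) this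
      · intro a b ha hb i
        rw [coeff_add]
        exact dvd_add (ha i) (hb i)
    · intro h
      rw [← x.sum_C_mul_X_pow_eq]
      refine Submodule.sum_mem _ fun i _ => ?_
      obtain ⟨c, hc⟩ := h i
      have key : C (x.coeff i) * X ^ i = C c * ((C (p : ℤ)) ^ (k + 1 - i) * X ^ i) := by
        rw [hc]
        push_cast [map_mul, map_pow]
        ring
      show C (x.coeff i) * X ^ i ∈ _
      rw [key]
      refine Ideal.mul_mem_left _ _ ?_
      have h1 : (C (p : ℤ)) ^ (k + 1 - i) * X ^ i ∈
          (Ideal.span {C (p : ℤ), X} : Ideal (Polynomial ℤ)) ^ (k + 1 - i + i) := by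
        rw [pow_add]
        exact Ideal.mul_mem_mul
          (Ideal.pow_mem_pow (Ideal.subset_span (by simp)) _)
          (Ideal.pow_mem_pow (Ideal.subset_span (by simp)) _)
      exact Ideal.pow_le_pow_right (by omega) h1

theorem madic_abs_multiplicative (p : ℕ) (hp : p.Prime)
    (𝔪 : Ideal (Polynomial ℤ))
    (h𝔪 : 𝔪 = Ideal.span {Polynomial.C (p : ℤ), 1 - Polynomial.X})
    (x y : Polynomial ℤ) (n m : ℕ)
    (hx : x ∈ 𝔪 ^ n) (hx' : x ∉ 𝔪 ^ (n + 1))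
    (hy : y ∈ 𝔪 ^ m) (hy' : y ∉ 𝔪 ^ (m + 1)) :
    x * y ∈ 𝔪 ^ (n + m) ∧ x * y ∉ 𝔪 ^ (n + m + 1) := by
  have hmem : x * y ∈ 𝔪 ^ (n + m) := by
    rw [pow_add]; exact Ideal.mul_mem_mul hx hy
  refine ⟨hmem, ?_⟩
  -- transport everything through σ : X ↦ 1 - X
  have hmap : Ideal.map madicSigma 𝔪 = Ideal.span {C (p : ℤ), X} := by
    rw [h𝔪, Ideal.map_span]
    congr 1
    have h1 : madicSigma (C (p : ℤ)) = C (p : ℤ) := by simp [madicSigma]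
    have h2 : madicSigma (1 - X) = X := by
      simp [madicSigma_apply, sub_comp, sub_sub_cancel]
    rw [Set.image_insert_eq, Set.image_singleton, h1, h2]
  have key : ∀ (z : Polynomial ℤ) (k : ℕ),
      z ∈ 𝔪 ^ k ↔ ∀ i, (p : ℤ) ^ (k - i) ∣ (madicSigma z).coeff i := by
    intro z k
    rw [← mem_span_pX_pow_iff, ← hmap, ← Ideal.map_pow]
    constructor
    · exact fun h => Ideal.mem_map_of_mem _ h
    · intro h
      obtain ⟨w, hw, hwz⟩ := (Ideal.mem_map_iff_of_surjective _ madicSigma_surj).mp h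
      rwa [madicSigma_inj hwz] at hw
  set a : ℕ → ℤ := fun i => (madicSigma x).coeff i with ha_def
  set b : ℕ → ℤ := fun i => (madicSigma y).coeff i with hb_def
  have hA : ∀ i, (p : ℤ) ^ (n - i) ∣ a i := (key x n).mp hx
  have hB : ∀ i, (p : ℤ) ^ (m - i) ∣ b i := (key y m).mp hy
  have hA' : ∃ i, ¬ (p : ℤ) ^ (n + 1 - i) ∣ a i := by
    by_contra h; push_neg at h; exact hx' ((key x (n + 1)).mpr h)
  have hB' : ∃ j, ¬ (p : ℤ) ^ (m + 1 - j) ∣ b j := by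
    by_contra h; push_neg at h; exact hy' ((key y (m + 1)).mpr h)
  classical
  set i0 := Nat.find hA' with hi0_def
  set j0 := Nat.find hB' with hj0_def
  have hi0 : ¬ (p : ℤ) ^ (n + 1 - i0) ∣ a i0 := Nat.find_spec hA'
  have hj0 : ¬ (p : ℤ) ^ (m + 1 - j0) ∣ b j0 := Nat.find_spec hB'
  have hi0min : ∀ i < i0, (p : ℤ) ^ (n + 1 - i) ∣ a i :=
    fun i hi => of_not_not (Nat.find_min hA' hi)
  have hj0min : ∀ j < j0, (p : ℤ) ^ (m + 1 - j) ∣ b j :=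
    fun j hj => of_not_not (Nat.find_min hB' hj)
  have hi0n : i0 ≤ n := by
    by_contra h
    exact hi0 (by rw [Nat.sub_eq_zero_of_le (by omega)]; exact one_dvd _)
  have hj0m : j0 ≤ m := by
    by_contra h
    exact hj0 (by rw [Nat.sub_eq_zero_of_le (by omega)]; exact one_dvd _)
  -- extract exact p-parts at i0, j0
  obtain ⟨u, hu⟩ := hA i0
  obtain ⟨w, hw⟩ := hB j0
  have hpu : ¬ (p : ℤ) ∣ u := by
    intro ⟨c, hc⟩
    apply hi0
    rw [hu, hc]
    exact ⟨c, by rw [show n + 1 - i0 = (n - i0) + 1 from by omega]; ring⟩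
  have hpw : ¬ (p : ℤ) ∣ w := by
    intro ⟨c, hc⟩
    apply hj0
    rw [hw, hc]
    exact ⟨c, by rw [show m + 1 - j0 = (m - j0) + 1 from by omega]; ring⟩
  set k := i0 + j0 with hk_def
  have hkle : k ≤ n + m := by omega
  intro hcontra
  have hc := (key (x * y) (n + m + 1)).mp hcontra k
  rw [map_mul, coeff_mul] at hc
  -- split the sum at (i0, j0)
  have hmemk : (i0, j0) ∈ Finset.HasAntidiagonal.antidiagonal k := by simp [hk_def]
  rw [← Finset.add_sum_erase _ _ hmemk] at hc
  have hrest : (p : ℤ) ^ (n + m + 1 - k) ∣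
      ∑ ij ∈ (Finset.HasAntidiagonal.antidiagonal k).erase (i0, j0), a ij.1 * b ij.2 := by
    refine Finset.dvd_sum fun ij hij => ?_
    obtain ⟨i, j⟩ := ij
    obtain ⟨hne, hij⟩ := Finset.mem_erase.mp hij
    rw [Finset.HasAntidiagonal.mem_antidiagonal] at hij
    simp only [ne_eq, Prod.mk.injEq, not_and] at hne
    have hijk : i + j = k := hij
    show (p : ℤ) ^ (n + m + 1 - k) ∣ a i * b j
    rcases lt_or_ge i i0 with hlt | hge
    · have h1 := hi0min i hlt
      have h2 := hB j
      have : n + m + 1 - k ≤ (n + 1 - i) + (m - j) := by omega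
      calc (p : ℤ) ^ (n + m + 1 - k) ∣ (p : ℤ) ^ ((n + 1 - i) + (m - j)) :=
            pow_dvd_pow _ this
        _ = (p : ℤ) ^ (n + 1 - i) * (p : ℤ) ^ (m - j) := pow_add _ _ _
        _ ∣ a i * b j := mul_dvd_mul h1 h2
    · have hj : j < j0 := by
        rcases Nat.lt_or_ge j j0 with h | h
        · exact h
        · exfalso; have : i = i0 := by omega
          exact hne this (by omega)
      have h1 := hA i
      have h2 := hj0min j hj
      have : n + m + 1 - k ≤ (n - i) + (m + 1 - j) := by omega
      calc (p : ℤ) ^ (n + m + 1 - k) ∣ (p : ℤ) ^ ((n - i) + (m + 1 - j)) :=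
            pow_dvd_pow _ this
        _ = (p : ℤ) ^ (n - i) * (p : ℤ) ^ (m + 1 - j) := pow_add _ _ _
        _ ∣ a i * b j := mul_dvd_mul h1 h2
  have hmain : (p : ℤ) ^ (n + m + 1 - k) ∣ a i0 * b j0 := by
    have := dvd_sub hc hrest
    simpa [ha_def, hb_def] using this
  -- but a i0 * b j0 = p^(n+m-k) * (u * w) with p ∤ u*w
  have hprime : Prime (p : ℤ) := Nat.prime_iff_prime_int.mp hp
  have hexp : n + m + 1 - k = (n + m - k) + 1 := by omega
  rw [hu, hw, hexp] at hmain
  have heq : (p : ℤ) ^ (n - i0) * u * ((p : ℤ) ^ (m - j0) * w) =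
      (p : ℤ) ^ (n + m - k) * (u * w) := by
    rw [show n + m - k = (n - i0) + (m - j0) from by omega, pow_add]; ring
  have hpnz : (p : ℤ) ^ (n + m - k) ≠ 0 :=
    pow_ne_zero _ (Int.natCast_ne_zero.mpr hp.ne_zero)
  rw [heq, pow_succ] at hmain
  have : (p : ℤ) ∣ u * w := (mul_dvd_mul_iff_left hpnz).mp hmain
  rcases hprime.dvd_mul.mp this with h | h
  · exact hpu h
  · exact hpw h
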